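/- Assume I(Y;Ỹ) > 0. Then there exists a constant E₀ > 0 such that for every integer t ≥ 1 and ((Y_i,Ỹ_i))_{i=1}^t i.i.d. with common law P_{YỸ}: P[ ∏_{i=1}^t λ(Y_i,Ỹ_i) ≤ 1 ] ≤ exp(−t·E₀). -/

import Mathlib

open Filter Real

section

variable {𝒴 : Type*} [Fintype 𝒴] [Nonempty 𝒴]

/-- `p` is a probability mass function on a finite alphabet. -/
def IsPmf {α : Type*} [Fintype α] (p : α → ℝ) : Prop := (∀ a, 0 ≤ p a) ∧ ∑ a, p a = 1

/-- The first marginal of a pmf on `𝒴 × 𝒴`. -/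
noncomputable def margFst (p : 𝒴 × 𝒴 → ℝ) (y : 𝒴) : ℝ := ∑ z, p (y, z)

/-- The two marginals of `p` agree. -/
def MargEq (p : 𝒴 × 𝒴 → ℝ) : Prop := ∀ y, ∑ z, p (y, z) = ∑ z, p (z, y)

/-- The likelihood ratio `λ(y, ỹ)`. -/
noncomputable def lam2 (p : 𝒴 × 𝒴 → ℝ) (y z : 𝒴) : ℝ :=
  if 0 < margFst p y * margFst p z then p (y, z) / (margFst p y * margFst p z) else 0

/-- The mutual information `I(Y; Ỹ)`. -/
noncomputable def mutInf2 (p : 𝒴 × 𝒴 → ℝ) : ℝ :=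
  ∑ z : 𝒴 × 𝒴, if 0 < p z then p z * Real.log (lam2 p z.1 z.2) else 0

/-- AM–GM for two reals. -/
lemma sqrt_mul_le_half_add {a b : ℝ} (ha : 0 ≤ a) (hb : 0 ≤ b) :
    Real.sqrt (a * b) ≤ (a + b) / 2 := by
  rw [Real.sqrt_mul ha]
  nlinarith [sq_nonneg (Real.sqrt a - Real.sqrt b), Real.sq_sqrt ha, Real.sq_sqrt hb]

/-- Strict AM–GM for two distinct reals. -/
lemma sqrt_mul_lt_half_add {a b : ℝ} (ha : 0 ≤ a) (hb : 0 ≤ b) (hab : a ≠ b) :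
    Real.sqrt (a * b) < (a + b) / 2 := by
  rw [Real.sqrt_mul ha]
  have hne : Real.sqrt a - Real.sqrt b ≠ 0 := by
    intro h
    exact hab ((Real.sqrt_inj ha hb).mp (by linarith [sub_eq_zero.mp h]))
  nlinarith [Real.sq_sqrt ha, Real.sq_sqrt hb, sq_pos_of_ne_zero hne]

/-- Sum of products over functions equals the power of the sum. -/
lemma sum_prod_fn {A : Type*} [Fintype A] (f : A → ℝ) :
    ∀ t : ℕ, ∑ z : Fin t → A, ∏ i, f (z i) = (∑ a, f a) ^ t := by
  intro t
  induction t with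
  | zero => simp
  | succ n ih =>
    calc ∑ z : Fin (n + 1) → A, ∏ i, f (z i)
        = ∑ q : A × (Fin n → A), f q.1 * ∏ i, f (q.2 i) := by
          rw [← (Fin.consEquiv (fun _ : Fin (n + 1) => A)).symm.sum_comp (fun q => f q.1 * ∏ i, f (q.2 i))]
          refine Finset.sum_congr rfl fun z _ => ?_
          simp [Fin.consEquiv, Fin.prod_univ_succ, Fin.tail]
      _ = (∑ a, f a) * ∑ w : Fin n → A, ∏ i, f (w i) := by
          rw [Fintype.sum_prod_type]
          simp only [← Finset.mul_sum]
          rw [← Finset.sum_mul]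
      _ = (∑ a, f a) ^ (n + 1) := by rw [ih]; ring

/-- Exponential bound for the probability that the product of likelihood
ratios of `t` i.i.d. pairs with law `P_{Y Ỹ}` is at most `1`. -/
theorem exponent_for_nonpositive_llr
    (p : 𝒴 × 𝒴 → ℝ) (hp : IsPmf p) (hm : MargEq p)
    (hI : 0 < mutInf2 p) :
    ∃ E₀ > (0 : ℝ), ∀ t : ℕ, 1 ≤ t →
      (∑ z : Fin t → 𝒴 × 𝒴, (∏ i, p (z i)) *
          (if (∏ i, lam2 p (z i).1 (z i).2) ≤ 1 then 1 else 0)) ≤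
        Real.exp (-(t : ℝ) * E₀) := by
  obtain ⟨hp0, hp1⟩ := hp
  set P : 𝒴 → ℝ := margFst p with hPdef
  have hP0 : ∀ y, 0 ≤ P y := fun y => Finset.sum_nonneg fun z _ => hp0 _
  -- marginal positivity on the support
  have hPpos : ∀ y z : 𝒴, 0 < p (y, z) → 0 < P y ∧ 0 < P z := by
    intro y z h
    constructor
    · exact lt_of_lt_of_le h (Finset.single_le_sum (fun w _ => hp0 (y, w)) (Finset.mem_univ z))
    · have : P z = ∑ w, p (w, z) := hm z
      rw [this]
      exact lt_of_lt_of_le h (Finset.single_le_sum (fun w _ => hp0 (w, z)) (Finset.mem_univ y))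
  have hPsum : ∑ y, P y = 1 := by
    rw [show (∑ y, P y) = ∑ w : 𝒴 × 𝒴, p w from (Fintype.sum_prod_type _).symm]
    exact hp1
  have hPPsum : ∑ w : 𝒴 × 𝒴, P w.1 * P w.2 = 1 := by
    rw [Fintype.sum_prod_type]
    simp only [← Finset.mul_sum, hPsum, mul_one]
  set H : 𝒴 × 𝒴 → ℝ := fun w => Real.sqrt (p w * (P w.1 * P w.2)) with hHdef
  have hH0 : ∀ w, 0 ≤ H w := fun w => Real.sqrt_nonneg _
  set ρ : ℝ := ∑ w : 𝒴 × 𝒴, H w with hρdef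
  -- ρ < 1
  have hex : ∃ w : 𝒴 × 𝒴, p w ≠ P w.1 * P w.2 := by
    by_contra hall
    push_neg at hall
    have : mutInf2 p = 0 := by
      refine Finset.sum_eq_zero fun w _ => ?_
      split_ifs with h
      · have hpos : 0 < P w.1 * P w.2 := by rw [← hall w]; exact h
        have : lam2 p w.1 w.2 = 1 := by
          rw [lam2, if_pos hpos, hall w, div_self (ne_of_gt hpos)]
        rw [this, Real.log_one, mul_zero]
      · rfl
    rw [this] at hI; exact lt_irrefl 0 hI
  obtain ⟨w₀, hw₀⟩ := hex
  have hρlt : ρ < 1 := by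
    have hlt : ρ < ∑ w : 𝒴 × 𝒴, (p w + P w.1 * P w.2) / 2 := by
      refine Finset.sum_lt_sum (fun w _ => sqrt_mul_le_half_add (hp0 w)
        (mul_nonneg (hP0 _) (hP0 _))) ⟨w₀, Finset.mem_univ _, ?_⟩
      exact sqrt_mul_lt_half_add (hp0 w₀) (mul_nonneg (hP0 _) (hP0 _)) hw₀
    have : ∑ w : 𝒴 × 𝒴, (p w + P w.1 * P w.2) / 2 = 1 := by
      rw [← Finset.sum_div, Finset.sum_add_distrib, hp1, hPPsum]; norm_num
    linarith
  -- ρ > 0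
  have hρpos : 0 < ρ := by
    have : ∃ w : 𝒴 × 𝒴, 0 < p w := by
      by_contra h
      push_neg at h
      have : ∑ w : 𝒴 × 𝒴, p w = 0 :=
        Finset.sum_eq_zero fun w _ => le_antisymm (h w) (hp0 w)
      rw [hp1] at this; norm_num at this
    obtain ⟨w₁, hw₁⟩ := this
    have hHpos : 0 < H w₁ := by
      refine Real.sqrt_pos.mpr (mul_pos hw₁ (mul_pos ?_ ?_))
      · exact (hPpos w₁.1 w₁.2 (by rwa [Prod.mk.eta])).1
      · exact (hPpos w₁.1 w₁.2 (by rwa [Prod.mk.eta])).2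
    exact lt_of_lt_of_le hHpos (Finset.single_le_sum (fun w _ => hH0 w) (Finset.mem_univ w₁))
  refine ⟨-Real.log ρ, by linarith [Real.log_neg hρpos hρlt], fun t ht => ?_⟩
  have hexp : Real.exp (-(t : ℝ) * -Real.log ρ) = ρ ^ t := by
    rw [show (-(t : ℝ) * -Real.log ρ) = (t : ℝ) * Real.log ρ by ring,
      Real.exp_nat_mul, Real.exp_log hρpos]
  rw [hexp]
  have key : ∀ z : Fin t → 𝒴 × 𝒴,
      (∏ i, p (z i)) * (if (∏ i, lam2 p (z i).1 (z i).2) ≤ 1 then 1 else 0)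
        ≤ ∏ i, H (z i) := by
    intro z
    have hHprod : 0 ≤ ∏ i, H (z i) := Finset.prod_nonneg fun i _ => hH0 _
    split_ifs with hle
    · rw [mul_one]
      by_cases hz : ∀ i, 0 < p (z i)
      · have hkey : ∀ i : Fin t, p (z i) = H (z i) * Real.sqrt (lam2 p (z i).1 (z i).2) := by
          intro i
          have hpi := hz i
          have hpi' : 0 < p ((z i).1, (z i).2) := by rwa [Prod.mk.eta]
          obtain ⟨h1, h2⟩ := hPpos (z i).1 (z i).2 hpi'
          have hPP : 0 < P (z i).1 * P (z i).2 := mul_pos h1 h2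
          rw [lam2, if_pos hPP, hHdef]
          rw [← Real.sqrt_mul (mul_nonneg (hp0 _) (le_of_lt hPP))]
          rw [show p (z i) * (P (z i).1 * P (z i).2) *
              (p ((z i).1, (z i).2) / (P (z i).1 * P (z i).2)) = p (z i) * p (z i) by
            rw [Prod.mk.eta]; field_simp]
          exact (Real.sqrt_mul_self (hp0 _)).symm
        calc (∏ i, p (z i))
            = (∏ i, H (z i)) * ∏ i, Real.sqrt (lam2 p (z i).1 (z i).2) := by
              rw [← Finset.prod_mul_distrib]
              exact Finset.prod_congr rfl fun i _ => hkey i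
          _ ≤ (∏ i, H (z i)) * 1 := by
              refine mul_le_mul_of_nonneg_left ?_ hHprod
              set s := ∏ i, Real.sqrt (lam2 p (z i).1 (z i).2) with hs
              have hs0 : 0 ≤ s := Finset.prod_nonneg fun i _ => Real.sqrt_nonneg _
              have hlam0 : ∀ i : Fin t, 0 ≤ lam2 p (z i).1 (z i).2 := by
                intro i
                rw [lam2]
                split_ifs with h
                · exact div_nonneg (hp0 _) (le_of_lt h)
                · exact le_refl 0
              have hsq : s ^ 2 ≤ 1 := by
                rw [hs, ← Finset.prod_pow]
                calc ∏ i, Real.sqrt (lam2 p (z i).1 (z i).2) ^ 2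
                    = ∏ i, lam2 p (z i).1 (z i).2 :=
                      Finset.prod_congr rfl fun i _ => Real.sq_sqrt (hlam0 i)
                  _ ≤ 1 := hle
              exact (pow_le_one_iff_of_nonneg hs0 two_ne_zero).mp hsq
          _ = ∏ i, H (z i) := mul_one _
      · push_neg at hz
        obtain ⟨i, hi⟩ := hz
        have : p (z i) = 0 := le_antisymm hi (hp0 _)
        rw [Finset.prod_eq_zero (Finset.mem_univ i) this]
        exact hHprod
    · rw [mul_zero]; exact hHprod
  calc (∑ z : Fin t → 𝒴 × 𝒴, (∏ i, p (z i)) *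
          (if (∏ i, lam2 p (z i).1 (z i).2) ≤ 1 then 1 else 0))
      ≤ ∑ z : Fin t → 𝒴 × 𝒴, ∏ i, H (z i) :=
        Finset.sum_le_sum fun z _ => key z
    _ = ρ ^ t := sum_prod_fn H t

end
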